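/- If G admits a linear coloring with k colors, then the treedepth of G is at most 2^k. -/

import Mathlib

/-- A linear coloring: every path in `G` contains a vertex whose color appears
exactly once on the path. -/
def IsLinearColoring {V C : Type*} [DecidableEq C] (G : SimpleGraph V) (ψ : V → C) : Prop :=
  ∀ ⦃u v : V⦄ (p : G.Walk u v), p.IsPath →
    ∃ w ∈ p.support, (p.support.map ψ).count (ψ w) = 1

/-- A centered coloring: every nonempty vertex set inducing a connected subgraph
contains a vertex whose color appears exactly once in the set. -/
def IsCenteredColoring {V C : Type*} [DecidableEq C] (G : SimpleGraph V) (φ : V → C) : Prop :=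
  ∀ S : Finset V, S.Nonempty → (G.induce (S : Set V)).Connected →
    ∃ w ∈ S, (S.filter (fun x => φ x = φ w)).card = 1

/-- The linear coloring number: minimum number of colors of a linear coloring. -/
noncomputable def chiLin {V : Type*} (G : SimpleGraph V) : ℕ :=
  sInf {k | ∃ ψ : V → Fin k, IsLinearColoring G ψ}

/-- The centered coloring number: minimum number of colors of a centered coloring. -/
noncomputable def chiCen {V : Type*} (G : SimpleGraph V) : ℕ :=
  sInf {k | ∃ φ : V → Fin k, IsCenteredColoring G φ}

/-- A treedepth decomposition of `G`: a rooted forest on the vertices of `G`,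
given by its ancestor relation `anc` (a partial order whose down-sets are chains),
such that every edge of `G` joins an ancestor-descendant pair. -/
structure TreedepthDecomp {V : Type*} (G : SimpleGraph V) where
  anc : V → V → Prop
  refl : ∀ v, anc v v
  antisymm : ∀ u v, anc u v → anc v u → u = v
  trans : ∀ u v w, anc u v → anc v w → anc u w
  chain : ∀ u v w, anc u w → anc v w → anc u v ∨ anc v u
  edge : ∀ u v, G.Adj u v → anc u v ∨ anc v u

/-- The decomposition has depth at most `k`: every ancestor-descendant chain has
at most `k` vertices. -/
def TreedepthDecomp.depthLE {V : Type*} {G : SimpleGraph V} (d : TreedepthDecomp G)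
    (k : ℕ) : Prop :=
  ∀ s : Finset V, (∀ a ∈ s, ∀ b ∈ s, d.anc a b ∨ d.anc b a) → s.card ≤ k

/-- The treedepth of `G`: minimum depth of a treedepth decomposition. -/
noncomputable def treedepth {V : Type*} (G : SimpleGraph V) : ℕ :=
  sInf {k | ∃ d : TreedepthDecomp G, d.depthLE k}

namespace LinTD

open SimpleGraph List

variable {V : Type*} {G : SimpleGraph V}


variable {V : Type*} {G : SimpleGraph V}

lemma support_length_le {C : Type*} [DecidableEq C] {ψ : V → C}
    (h : ∀ ⦃u v : V⦄ (p : G.Walk u v), p.IsPath →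
      ∃ w ∈ p.support, (p.support.map ψ).count (ψ w) = 1) :
    ∀ (m : ℕ) {u v : V} (p : G.Walk u v), p.IsPath →
      (p.support.map ψ).toFinset.card ≤ m → p.support.length ≤ 2 ^ m - 1 := by
  classical
  intro m
  induction m with
  | zero =>
    intro u v p hp hc
    exfalso
    have h1 : ψ u ∈ (p.support.map ψ).toFinset := by
      rw [List.mem_toFinset]
      exact List.mem_map_of_mem (f := ψ) p.start_mem_support
    have := Finset.card_pos.mpr ⟨_, h1⟩
    omega
  | succ m ih =>
    intro u v p hp hc
    obtain ⟨w, hw, hcount⟩ := h p hp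
    have hwmem : ψ w ∈ (p.support.map ψ).toFinset := by
      rw [List.mem_toFinset]; exact List.mem_map_of_mem (f := ψ) hw
    have hec : ((p.support.map ψ).toFinset.erase (ψ w)).card ≤ m := by
      rw [Finset.card_erase_of_mem hwmem]; omega
    -- helper: a path whose tail-colors avoid ψ w and lie in p's colors has ≤ 2^m vertices
    have helper : ∀ {a b : V} (r : G.Walk a b), r.IsPath →
        (∀ x ∈ r.support.tail.map ψ, x ∈ (p.support.map ψ).toFinset.erase (ψ w)) →
        r.support.length ≤ 2 ^ m := by
      intro a b r hr hcol
      cases r with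
      | nil => simpa using Nat.one_le_two_pow
      | @cons a c b hadj r' =>
        have hr' : r'.IsPath := hr.of_cons
        have hcard : (r'.support.map ψ).toFinset.card ≤ m := by
          refine le_trans (Finset.card_le_card ?_) hec
          intro x hx
          rw [List.mem_toFinset] at hx
          exact hcol x (by simpa using hx)
        have := ih r' hr' hcard
        simp only [Walk.support_cons, List.length_cons]
        have h1 : 1 ≤ 2 ^ m := Nat.one_le_two_pow
        omega
    set q := p.takeUntil w hw with hq
    set r := p.dropUntil w hw with hr
    have hsp : p.support = q.support ++ r.support.tail := by
      conv_lhs => rw [← p.take_spec hw]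
      rw [Walk.support_append]
    have hqp : q.IsPath := hp.takeUntil hw
    have hrp : r.IsPath := hp.dropUntil hw
    have hsplit : (p.support.map ψ) = q.support.map ψ ++ r.support.tail.map ψ := by
      rw [hsp, List.map_append]
    have hcnt : (q.support.map ψ).count (ψ w) + (r.support.tail.map ψ).count (ψ w) = 1 := by
      rw [← List.count_append, ← hsplit]; exact hcount
    have hwq : ψ w ∈ q.support.map ψ := List.mem_map_of_mem (f := ψ) q.end_mem_support
    have hcq : (q.support.map ψ).count (ψ w) = 1 := by
      have := List.count_pos_iff.mpr hwq
      omega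
    have hcr : (r.support.tail.map ψ).count (ψ w) = 0 := by omega
    -- bound r
    have hrbound : r.support.length ≤ 2 ^ m := by
      refine helper r hrp ?_
      intro x hx
      rw [Finset.mem_erase]
      constructor
      · intro hxw; rw [hxw] at hx
        rw [List.count_eq_zero] at hcr; exact hcr hx
      · rw [List.mem_toFinset, hsplit]
        exact List.mem_append_right _ hx
    -- bound q via its reverse
    have hqbound : q.support.length ≤ 2 ^ m := by
      have hqr : q.reverse.support.length ≤ 2 ^ m := by
        refine helper q.reverse hqp.reverse ?_
        intro x hx
        have hh : (q.reverse.support.map ψ).count (ψ w) = 1 := by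
          rw [Walk.support_reverse, List.map_reverse, List.count_reverse]
          exact hcq
        have hcons : q.reverse.support = w :: q.reverse.support.tail :=
          q.reverse.support_eq_cons
        have htail0 : (q.reverse.support.tail.map ψ).count (ψ w) = 0 := by
          rw [hcons] at hh
          simp only [List.map_cons, List.count_cons_self] at hh
          omega
        rw [Finset.mem_erase]
        constructor
        · intro hxw; rw [hxw] at hx
          rw [List.count_eq_zero] at htail0; exact htail0 hx
        · rw [List.mem_toFinset, hsplit]
          obtain ⟨y, hy, rfl⟩ := List.mem_map.mp hx
          have : y ∈ q.support := by
            have : y ∈ q.reverse.support := List.mem_of_mem_tail hy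
            rwa [Walk.support_reverse, List.mem_reverse] at this
          exact List.mem_append_left _ (List.mem_map_of_mem (f := ψ) this)
      rwa [Walk.support_reverse, List.length_reverse] at hqr
    have hrlen : 1 ≤ r.support.length := by
      rw [r.support_eq_cons]; simp
    rw [hsp, List.length_append]
    have : 2 ^ (m + 1) = 2 ^ m + 2 ^ m := by ring
    have h1 : 1 ≤ 2 ^ m := Nat.one_le_two_pow
    have : r.support.tail.length = r.support.length - 1 := by
      rw [List.length_tail]
    omega



variable {V : Type*} {G : SimpleGraph V}

def Reach (G : SimpleGraph V) (S : Set V) (u w : V) : Prop :=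
  ∃ p : G.Walk u w, ∀ x ∈ p.support, x ∈ S

lemma Reach.refl {S : Set V} {u : V} (hu : u ∈ S) : Reach G S u u :=
  ⟨Walk.nil, by simpa using hu⟩

lemma Reach.trans {S : Set V} {u v w : V} (h1 : Reach G S u v) (h2 : Reach G S v w) :
    Reach G S u w := by
  obtain ⟨p, hp⟩ := h1; obtain ⟨q, hq⟩ := h2
  refine ⟨p.append q, ?_⟩
  intro x hx
  rw [Walk.mem_support_append_iff] at hx
  rcases hx with hx | hx
  · exact hp x hx
  · exact hq x hx

lemma Reach.adj {S : Set V} {u v w : V} (h1 : Reach G S u v) (h2 : G.Adj v w) (hw : w ∈ S) :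
    Reach G S u w := by
  obtain ⟨p, hp⟩ := h1
  refine ⟨p.append (Walk.cons h2 Walk.nil), ?_⟩
  intro x hx
  rw [Walk.mem_support_append_iff] at hx
  rcases hx with hx | hx
  · exact hp x hx
  · have hx' : x = v ∨ x = w := by simpa using hx
    rcases hx' with rfl | rfl
    · exact hp _ p.end_mem_support
    · exact hw

structure GoodCore (G : SimpleGraph V) (S : Finset V) (anc : V → V → Prop) : Prop where
  refl : ∀ x, anc x x
  mem : ∀ a b, anc a b → a ≠ b → a ∈ S ∧ b ∈ S
  trans : ∀ a b c, anc a b → anc b c → anc a c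
  antisymm : ∀ a b, anc a b → anc b a → a = b
  chain : ∀ a b c, anc a c → anc b c → anc a b ∨ anc b a
  edge : ∀ a ∈ S, ∀ b ∈ S, G.Adj a b → anc a b ∨ anc b a

structure Good (G : SimpleGraph V) (S : Finset V) (anc : V → V → Prop)
    extends GoodCore G S anc : Prop where
  path : ∀ c : Finset V, c.Nonempty → (∀ x ∈ c, x ∈ S) →
    (∀ a ∈ c, ∀ b ∈ c, anc a b ∨ anc b a) →
    ∃ (x y : V) (p : G.Walk x y), p.IsPath ∧ (∀ z ∈ p.support, z ∈ S) ∧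
      ∀ z ∈ c, z ∈ p.support

structure GoodR (G : SimpleGraph V) (S : Finset V) (v : V) (anc : V → V → Prop)
    extends GoodCore G S anc : Prop where
  root : ∀ b ∈ S, anc v b
  rpath : ∀ c : Finset V, (∀ x ∈ c, x ∈ S) →
    (∀ a ∈ c, ∀ b ∈ c, anc a b ∨ anc b a) →
    ∃ (y : V) (p : G.Walk v y), p.IsPath ∧ (∀ z ∈ p.support, z ∈ S) ∧
      ∀ z ∈ c, z ∈ p.support

lemma adj_mem_component {S' : Finset V} {r a b : V} (ha : Reach G ↑S' r a)
    (hab : G.Adj a b) (hb : b ∈ S') : Reach G ↑S' r b :=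
  ha.adj hab (by exact_mod_cast hb)

/-- rooted construction -/
lemma rooted : ∀ (n : ℕ) (S : Finset V), S.card ≤ n → ∀ v ∈ S,
    (∀ u ∈ S, Reach G ↑S v u) → ∃ anc, GoodR G S v anc := by
  classical
  intro n
  induction n with
  | zero =>
    intro S hS v hv _
    exact absurd (Finset.card_pos.mpr ⟨v, hv⟩) (by omega)
  | succ n ih =>
    intro S hS v hv hreach
    set S' := S.erase v with hS'def
    rcases S'.eq_empty_or_nonempty with hS' | ⟨u0, hu0⟩
    · -- S ⊆ {v}
      have hsub : ∀ x ∈ S, x = v := by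
        intro x hx
        by_contra hxv
        have : x ∈ S' := Finset.mem_erase.mpr ⟨hxv, hx⟩
        rw [hS'] at this; simp at this
      refine ⟨Eq, ⟨⟨fun _ => rfl, fun a b hab hne => absurd hab hne,
        fun a b c h1 h2 => h1.trans h2, fun a b h1 _ => h1,
        fun a b c h1 h2 => Or.inl (h1.trans h2.symm),
        fun a ha b hb hab => absurd ((hsub a ha).trans (hsub b hb).symm) hab.ne⟩,
        fun b hb => (hsub b hb).symm, ?_⟩⟩
      intro c hc _
      refine ⟨v, Walk.nil, Walk.IsPath.nil, by simpa using hv, ?_⟩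
      intro z hz
      have := hsub z (hc z hz)
      simp [this]
    · -- nontrivial case
      have hu0v : u0 ≠ v := (Finset.mem_erase.mp hu0).1
      have hu0S : u0 ∈ S := (Finset.mem_erase.mp hu0).2
      obtain ⟨w0, hw0⟩ := hreach u0 hu0S
      have hP : ∃ p : G.Walk v u0, p.IsPath ∧ ∀ x ∈ p.support, x ∈ (S : Set V) :=
        ⟨w0.bypass, w0.bypass_isPath, fun x hx => hw0 x (w0.support_bypass_subset hx)⟩
      obtain ⟨p0, hp0, hsup0⟩ := hP
      cases p0 with
      | nil => exact absurd rfl hu0v.symm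
      | @cons _ r _ hvr p1 =>
        rw [Walk.cons_isPath_iff] at hp0
        have hrS : r ∈ S := by
          exact_mod_cast hsup0 r (by simp [Walk.support_cons, p1.start_mem_support])
        have hrv : r ≠ v := by
          intro hh; exact hp0.2 (hh ▸ p1.start_mem_support)
        have hrS' : r ∈ S' := Finset.mem_erase.mpr ⟨hrv, hrS⟩
        set D := S'.filter (fun w => Reach G ↑S' r w) with hDdef
        have hDsub : D ⊆ S' := Finset.filter_subset _ _
        have hDS : D ⊆ S := hDsub.trans (Finset.erase_subset _ _)
        have hrD : r ∈ D := Finset.mem_filter.mpr ⟨hrS', Reach.refl (by exact_mod_cast hrS')⟩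
        have hvD : v ∉ D := fun hh => by
          have := hDsub hh; simp [hS'def] at this
        have hvS' : v ∉ S' := by simp [hS'def]
        -- reach inside D
        have hreachD : ∀ u ∈ D, Reach G ↑D r u := by
          intro u hu
          obtain ⟨q, hq⟩ := (Finset.mem_filter.mp hu).2
          refine ⟨q, ?_⟩
          intro x hx
          have hx1 : Reach G ↑S' r x := ⟨q.takeUntil x hx,
            fun y hy => hq y (q.support_takeUntil_subset hx hy)⟩
          have hx2 : x ∈ S' := by exact_mod_cast hq x hx
          exact_mod_cast Finset.mem_filter.mpr ⟨hx2, hx1⟩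
        have hDcard : D.card ≤ n := by
          have h1 : D.card ≤ S'.card := Finset.card_le_card hDsub
          have h2 : S'.card = S.card - 1 := Finset.card_erase_of_mem hv
          omega
        obtain ⟨anc1, h1⟩ := ih D hDcard r hrD hreachD
        set S2 := S \ D with hS2def
        have hvS2 : v ∈ S2 := Finset.mem_sdiff.mpr ⟨hv, hvD⟩
        have hS2card : S2.card ≤ n := by
          have h1 : S2.card = S.card - D.card := Finset.card_sdiff_of_subset hDS
          have h2 : 1 ≤ D.card := Finset.card_pos.mpr ⟨r, hrD⟩
          omega
        have hdisj : ∀ x, x ∈ D → x ∈ S2 → False := by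
          intro x h1 h2; exact (Finset.mem_sdiff.mp h2).2 h1
        -- reach inside S2
        have hreachS2 : ∀ u ∈ S2, Reach G ↑S2 v u := by
          intro u hu
          rcases eq_or_ne u v with rfl | huv
          · exact Reach.refl (by exact_mod_cast hu)
          obtain ⟨w1, hw1⟩ := hreach u (Finset.mem_sdiff.mp hu).1
          have hQ : ∃ q : G.Walk v u, q.IsPath ∧ ∀ x ∈ q.support, x ∈ (S : Set V) :=
            ⟨w1.bypass, w1.bypass_isPath, fun x hx => hw1 x (w1.support_bypass_subset hx)⟩
          obtain ⟨q, hqp, hqs⟩ := hQ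
          cases q with
          | nil => exact absurd rfl huv
          | @cons _ s _ hvs q' =>
            rw [Walk.cons_isPath_iff] at hqp
            have hq'S' : ∀ y ∈ q'.support, y ∈ S' := by
              intro y hy
              have hyS : y ∈ S := by
                exact_mod_cast hqs y (by simp [Walk.support_cons]; right; exact hy)
              have hyv : y ≠ v := fun hh => hqp.2 (hh ▸ hy)
              exact Finset.mem_erase.mpr ⟨hyv, hyS⟩
            refine ⟨Walk.cons hvs q', ?_⟩
            intro x hx
            simp only [Walk.support_cons, List.mem_cons] at hx
            rcases hx with rfl | hx
            · exact_mod_cast hvS2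
            have hxS' : x ∈ S' := hq'S' x hx
            have hxS : x ∈ S := (Finset.erase_subset _ _) hxS'
            -- x ∉ D, else u ∈ D
            have hxD : x ∉ D := by
              intro hxD
              have hru : Reach G ↑S' r u := by
                refine ((Finset.mem_filter.mp hxD).2).trans ⟨q'.dropUntil x hx, ?_⟩
                intro y hy
                exact_mod_cast hq'S' y (q'.support_dropUntil_subset hx hy)
              have huS' : u ∈ S' := Finset.mem_erase.mpr ⟨huv, (Finset.mem_sdiff.mp hu).1⟩
              exact (Finset.mem_sdiff.mp hu).2 (Finset.mem_filter.mpr ⟨huS', hru⟩)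
            exact_mod_cast Finset.mem_sdiff.mpr ⟨hxS, hxD⟩
        obtain ⟨anc2, h2⟩ := ih S2 hS2card v hvS2 hreachS2
        -- combine
        set anc : V → V → Prop := fun a b => anc2 a b ∨ anc1 a b ∨ (a = v ∧ b ∈ D)
          with hancdef
        have m1 : ∀ a b, anc1 a b → a ≠ b → a ∈ D ∧ b ∈ D := h1.mem
        have m2 : ∀ a b, anc2 a b → a ≠ b → a ∈ S2 ∧ b ∈ S2 := h2.mem
        have anc2v : ∀ a, anc2 a v → a = v := fun a ha =>
          h2.antisymm a v ha (h2.root a (by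
            rcases eq_or_ne a v with rfl | hav
            · exact hvS2
            · exact (m2 a v ha hav).1))
        refine ⟨anc, ⟨⟨fun x => Or.inl (h2.refl x), ?_, ?_, ?_, ?_, ?_⟩, ?_, ?_⟩⟩
        · -- mem
          rintro a b (hab | hab | ⟨rfl, hb⟩) hne
          · exact ⟨Finset.mem_sdiff.mp (m2 a b hab hne).1 |>.1,
              Finset.mem_sdiff.mp (m2 a b hab hne).2 |>.1⟩
          · exact ⟨hDS (m1 a b hab hne).1, hDS (m1 a b hab hne).2⟩
          · exact ⟨hv, hDS hb⟩
        · -- trans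
          rintro a b c hab hbc
          rcases eq_or_ne a b with rfl | hne1; · exact hbc
          rcases eq_or_ne b c with rfl | hne2; · exact hab
          rcases hab with hab | hab | ⟨hav, hbD⟩
          · rcases hbc with hbc | hbc | ⟨hbv, hcD⟩
            · exact Or.inl (h2.trans a b c hab hbc)
            · exact absurd (m1 b c hbc hne2).1 (fun hh => hdisj b hh (m2 a b hab hne1).2)
            · exact Or.inr (Or.inr ⟨anc2v a (hbv ▸ hab), hcD⟩)
          · rcases hbc with hbc | hbc | ⟨hbv, hcD⟩
            · exact absurd (m1 a b hab hne1).2 (fun hh => hdisj b hh (m2 b c hbc hne2).1)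
            · exact Or.inr (Or.inl (h1.trans a b c hab hbc))
            · exact absurd (hbv ▸ (m1 a b hab hne1).2) hvD
          · rcases hbc with hbc | hbc | ⟨hbv, hcD⟩
            · exact absurd hbD (fun hh => hdisj b hh (m2 b c hbc hne2).1)
            · exact Or.inr (Or.inr ⟨hav, (m1 b c hbc hne2).2⟩)
            · exact absurd (hbv ▸ hbD) hvD
        · -- antisymm
          rintro a b hab hba
          by_contra hne
          have hne' : b ≠ a := fun hh => hne hh.symm
          rcases hab with hab | hab | ⟨hav, hbD⟩ <;>
            rcases hba with hba | hba | ⟨hbv, haD⟩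
          · exact hne (h2.antisymm a b hab hba)
          · exact hdisj a (m1 b a hba hne').2 (m2 a b hab hne).1
          · exact hdisj a haD (m2 a b hab hne).1
          · exact hdisj b (m1 a b hab hne).2 (m2 b a hba hne').1
          · exact hne (h1.antisymm a b hab hba)
          · exact hvD (hbv ▸ (m1 a b hab hne).2)
          · exact hdisj b hbD (m2 b a hba hne').1
          · exact hvD (hav ▸ (m1 b a hba hne').2)
          · exact hne (hav.trans hbv.symm)
        · -- chain
          rintro a b c hac hbc
          rcases eq_or_ne a c with rfl | hnac
          · exact Or.inr hbc
          rcases eq_or_ne b c with rfl | hnbc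
          · exact Or.inl hac
          rcases hac with hac | hac | ⟨hav, hcD⟩
          · rcases hbc with hbc | hbc | ⟨hbv, hcD⟩
            · rcases h2.chain a b c hac hbc with hh | hh
              · exact Or.inl (Or.inl hh)
              · exact Or.inr (Or.inl hh)
            · exact absurd (m1 b c hbc hnbc).2 (fun hh => hdisj c hh (m2 a c hac hnac).2)
            · exact absurd hcD (fun hh => hdisj c hh (m2 a c hac hnac).2)
          · rcases hbc with hbc | hbc | ⟨hbv, hcD⟩
            · exact absurd (m1 a c hac hnac).2 (fun hh => hdisj c hh (m2 b c hbc hnbc).2)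
            · rcases h1.chain a b c hac hbc with hh | hh
              · exact Or.inl (Or.inr (Or.inl hh))
              · exact Or.inr (Or.inr (Or.inl hh))
            · exact Or.inr (Or.inr (Or.inr ⟨hbv, (m1 a c hac hnac).1⟩))
          · rcases hbc with hbc | hbc | ⟨hbv, hcD'⟩
            · exact absurd hcD (fun hh => hdisj c hh (m2 b c hbc hnbc).2)
            · exact Or.inl (Or.inr (Or.inr ⟨hav, (m1 b c hbc hnbc).1⟩))
            · exact Or.inl (Or.inl (show anc2 a b by rw [hav, hbv]; exact h2.refl v))
        · -- edge
          intro a ha b hb hab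
          by_cases haD : a ∈ D <;> by_cases hbD : b ∈ D
          · rcases h1.edge a haD b hbD hab with hh | hh
            · exact Or.inl (Or.inr (Or.inl hh))
            · exact Or.inr (Or.inr (Or.inl hh))
          · -- a ∈ D, b ∉ D
            rcases eq_or_ne b v with rfl | hbv
            · exact Or.inr (Or.inr (Or.inr ⟨rfl, haD⟩))
            · exfalso
              have hbS' : b ∈ S' := Finset.mem_erase.mpr ⟨hbv, hb⟩
              exact hbD (Finset.mem_filter.mpr ⟨hbS',
                adj_mem_component (Finset.mem_filter.mp haD).2 hab hbS'⟩)
          · rcases eq_or_ne a v with rfl | hav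
            · exact Or.inl (Or.inr (Or.inr ⟨rfl, hbD⟩))
            · exfalso
              have haS' : a ∈ S' := Finset.mem_erase.mpr ⟨hav, ha⟩
              exact haD (Finset.mem_filter.mpr ⟨haS',
                adj_mem_component (Finset.mem_filter.mp hbD).2 hab.symm haS'⟩)
          · rcases h2.edge a (Finset.mem_sdiff.mpr ⟨ha, haD⟩) b
              (Finset.mem_sdiff.mpr ⟨hb, hbD⟩) hab with hh | hh
            · exact Or.inl (Or.inl hh)
            · exact Or.inr (Or.inl hh)
        · -- root
          intro b hb
          by_cases hbD : b ∈ D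
          · exact Or.inr (Or.inr ⟨rfl, hbD⟩)
          · exact Or.inl (h2.root b (Finset.mem_sdiff.mpr ⟨hb, hbD⟩))
        · -- rpath
          intro c hcS hchain
          by_cases hcD : ∃ d ∈ c, d ∈ D
          · obtain ⟨d, hdc, hdD⟩ := hcD
            have hsub : ∀ a ∈ c, a = v ∨ a ∈ D := by
              intro a hac
              by_contra hcon
              push_neg at hcon
              obtain ⟨hav, haD⟩ := hcon
              rcases hchain a hac d hdc with hh | hh
              · rcases eq_or_ne a d with rfl | hnad
                · exact haD hdD
                rcases hh with hh | hh | hh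
                · exact hdisj d hdD (m2 a d hh hnad).2
                · exact haD (m1 a d hh hnad).1
                · exact hav hh.1
              · rcases eq_or_ne d a with rfl | hnda
                · exact haD hdD
                rcases hh with hh | hh | hh
                · exact hdisj d hdD (m2 d a hh hnda).1
                · exact haD (m1 d a hh hnda).2
                · exact hvD (hh.1 ▸ hdD)
            set c1 := c.erase v with hc1def
            have hc1D : ∀ x ∈ c1, x ∈ D := by
              intro x hx
              rcases hsub x (Finset.mem_of_mem_erase hx) with rfl | hh
              · exact absurd rfl (Finset.mem_erase.mp hx).1
              · exact hh
            have hc1chain : ∀ a ∈ c1, ∀ b ∈ c1, anc1 a b ∨ anc1 b a := by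
              intro a ha b hb
              have haD := hc1D a ha
              have hbD := hc1D b hb
              rcases eq_or_ne a b with rfl | hne
              · exact Or.inl (h1.refl a)
              rcases hchain a (Finset.mem_of_mem_erase ha) b (Finset.mem_of_mem_erase hb)
                with (hh | hh | hh) | (hh | hh | hh)
              · exact absurd (m2 a b hh hne).1 (fun hx => hdisj a haD hx)
              · exact Or.inl hh
              · exact absurd hh.1 (Finset.mem_erase.mp ha).1
              · exact absurd (m2 b a hh hne.symm).1 (fun hx => hdisj b hbD hx)
              · exact Or.inr hh
              · exact absurd hh.1 (Finset.mem_erase.mp hb).1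
            obtain ⟨y, p, hpp, hpsub, hpcov⟩ := h1.rpath c1 hc1D hc1chain
            have hvnp : v ∉ p.support := fun hh => hvD (by exact_mod_cast hpsub v hh)
            refine ⟨y, Walk.cons hvr p, Walk.cons_isPath_iff _ _ |>.mpr ⟨hpp, hvnp⟩, ?_, ?_⟩
            · intro z hz
              simp only [Walk.support_cons, List.mem_cons] at hz
              rcases hz with rfl | hz
              · exact_mod_cast hv
              · exact_mod_cast hDS (by exact_mod_cast hpsub z hz)
            · intro z hz
              simp only [Walk.support_cons, List.mem_cons]
              rcases eq_or_ne z v with rfl | hzv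
              · exact Or.inl rfl
              · exact Or.inr (hpcov z (Finset.mem_erase.mpr ⟨hzv, hz⟩))
          · push_neg at hcD
            have hcS2 : ∀ x ∈ c, x ∈ S2 :=
              fun x hx => Finset.mem_sdiff.mpr ⟨hcS x hx, hcD x hx⟩
            have hchain2 : ∀ a ∈ c, ∀ b ∈ c, anc2 a b ∨ anc2 b a := by
              intro a ha b hb
              rcases eq_or_ne a b with rfl | hne
              · exact Or.inl (h2.refl a)
              rcases hchain a ha b hb with (hh | hh | hh) | (hh | hh | hh)
              · exact Or.inl hh
              · exact absurd (m1 a b hh hne).2 (hcD b hb)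
              · exact absurd hh.2 (hcD b hb)
              · exact Or.inr hh
              · exact absurd (m1 b a hh hne.symm).2 (hcD a ha)
              · exact absurd hh.2 (hcD a ha)
            obtain ⟨y, p, hpp, hpsub, hpcov⟩ := h2.rpath c hcS2 hchain2
            exact ⟨y, p, hpp, fun z hz => by
              exact_mod_cast (Finset.sdiff_subset (s := S) (t := D))
                (by exact_mod_cast hpsub z hz), hpcov⟩

lemma main : ∀ (n : ℕ) (S : Finset V), S.card ≤ n → ∃ anc, Good G S anc := by
  classical
  intro n
  induction n with
  | zero =>
    intro S hS
    have : S = ∅ := Finset.card_eq_zero.mp (by omega)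
    subst this
    refine ⟨Eq, ⟨⟨fun _ => rfl, fun a b hab hne => absurd hab hne,
      fun a b c h1 h2 => h1.trans h2, fun a b h1 _ => h1,
      fun a b c h1 h2 => Or.inl (h1.trans h2.symm),
      fun a ha => absurd ha (by simp)⟩, ?_⟩⟩
    intro c hc hcS _
    obtain ⟨x, hx⟩ := hc
    exact absurd (hcS x hx) (by simp)
  | succ n ih =>
    intro S hS
    rcases S.eq_empty_or_nonempty with rfl | ⟨v, hv⟩
    · exact ih ∅ (by simp)
    set D := S.filter (fun w => Reach G ↑S v w) with hDdef
    have hDS : D ⊆ S := Finset.filter_subset _ _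
    have hvD : v ∈ D := Finset.mem_filter.mpr ⟨hv, Reach.refl (by exact_mod_cast hv)⟩
    have hreachD : ∀ u ∈ D, Reach G ↑D v u := by
      intro u hu
      obtain ⟨q, hq⟩ := (Finset.mem_filter.mp hu).2
      refine ⟨q, ?_⟩
      intro x hx
      have hx1 : Reach G ↑S v x := ⟨q.takeUntil x hx,
        fun y hy => hq y (q.support_takeUntil_subset hx hy)⟩
      have hx2 : x ∈ S := by exact_mod_cast hq x hx
      exact_mod_cast Finset.mem_filter.mpr ⟨hx2, hx1⟩
    obtain ⟨anc1, h1⟩ := rooted D.card D le_rfl v hvD hreachD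
    set S2 := S \ D with hS2def
    have hS2card : S2.card ≤ n := by
      have h1 : S2.card = S.card - D.card := Finset.card_sdiff_of_subset hDS
      have h2 : 1 ≤ D.card := Finset.card_pos.mpr ⟨v, hvD⟩
      omega
    obtain ⟨anc2, h2⟩ := ih S2 hS2card
    have hdisj : ∀ x, x ∈ D → x ∈ S2 → False := by
      intro x hx1 hx2; exact (Finset.mem_sdiff.mp hx2).2 hx1
    have m1 : ∀ a b, anc1 a b → a ≠ b → a ∈ D ∧ b ∈ D := h1.mem
    have m2 : ∀ a b, anc2 a b → a ≠ b → a ∈ S2 ∧ b ∈ S2 := h2.mem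
    -- no cross edges
    have hcross : ∀ a ∈ D, ∀ b ∈ S, G.Adj a b → b ∈ D := by
      intro a ha b hb hab
      exact Finset.mem_filter.mpr ⟨hb,
        Reach.adj (Finset.mem_filter.mp ha).2 hab (by exact_mod_cast hb)⟩
    refine ⟨fun a b => anc1 a b ∨ anc2 a b, ⟨⟨fun x => Or.inl (h1.refl x), ?_, ?_, ?_, ?_, ?_⟩, ?_⟩⟩
    · rintro a b (hab | hab) hne
      · exact ⟨hDS (m1 a b hab hne).1, hDS (m1 a b hab hne).2⟩
      · exact ⟨(Finset.mem_sdiff.mp (m2 a b hab hne).1).1,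
          (Finset.mem_sdiff.mp (m2 a b hab hne).2).1⟩
    · rintro a b c (hab | hab) (hbc | hbc)
      · exact Or.inl (h1.trans a b c hab hbc)
      · rcases eq_or_ne a b with rfl | hne1; · exact Or.inr hbc
        rcases eq_or_ne b c with rfl | hne2; · exact Or.inl hab
        exact absurd (m1 a b hab hne1).2 (fun hh => hdisj b hh (m2 b c hbc hne2).1)
      · rcases eq_or_ne a b with rfl | hne1; · exact Or.inl hbc
        rcases eq_or_ne b c with rfl | hne2; · exact Or.inr hab
        exact absurd (m1 b c hbc hne2).1 (fun hh => hdisj b hh (m2 a b hab hne1).2)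
      · exact Or.inr (h2.trans a b c hab hbc)
    · rintro a b (hab | hab) (hba | hba)
      · exact h1.antisymm a b hab hba
      · rcases eq_or_ne a b with rfl | hne; · rfl
        exact absurd (m1 a b hab hne).2 (fun hh => hdisj b hh (m2 b a hba hne.symm).1)
      · rcases eq_or_ne a b with rfl | hne; · rfl
        exact absurd (m1 b a hba (fun hh2 => hne hh2.symm)).2 (fun hh => hdisj a hh (m2 a b hab hne).1)
      · exact h2.antisymm a b hab hba
    · rintro a b c (hac | hac) (hbc | hbc)
      · rcases h1.chain a b c hac hbc with hh | hh
        · exact Or.inl (Or.inl hh)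
        · exact Or.inr (Or.inl hh)
      · rcases eq_or_ne a c with rfl | hnac; · exact Or.inr (Or.inr hbc)
        rcases eq_or_ne b c with rfl | hnbc; · exact Or.inl (Or.inl hac)
        exact absurd (m1 a c hac hnac).2 (fun hh => hdisj c hh (m2 b c hbc hnbc).2)
      · rcases eq_or_ne a c with rfl | hnac; · exact Or.inr (Or.inl hbc)
        rcases eq_or_ne b c with rfl | hnbc; · exact Or.inl (Or.inr hac)
        exact absurd (m1 b c hbc hnbc).2 (fun hh => hdisj c hh (m2 a c hac hnac).2)
      · rcases h2.chain a b c hac hbc with hh | hh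
        · exact Or.inl (Or.inr hh)
        · exact Or.inr (Or.inr hh)
    · intro a ha b hb hab
      by_cases haD : a ∈ D <;> by_cases hbD : b ∈ D
      · rcases h1.edge a haD b hbD hab with hh | hh
        · exact Or.inl (Or.inl hh)
        · exact Or.inr (Or.inl hh)
      · exact absurd (hcross a haD b hb hab) hbD
      · exact absurd (hcross b hbD a ha hab.symm) haD
      · rcases h2.edge a (Finset.mem_sdiff.mpr ⟨ha, haD⟩) b
          (Finset.mem_sdiff.mpr ⟨hb, hbD⟩) hab with hh | hh
        · exact Or.inl (Or.inr hh)
        · exact Or.inr (Or.inr hh)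
    · -- path
      intro c hc hcS hchain
      by_cases hcD : ∃ d ∈ c, d ∈ D
      · obtain ⟨d, hdc, hdD⟩ := hcD
        have hsub : ∀ a ∈ c, a ∈ D := by
          intro a hac
          by_contra haD
          have haS2 : a ∈ S2 := Finset.mem_sdiff.mpr ⟨hcS a hac, haD⟩
          rcases eq_or_ne a d with rfl | hnad; · exact haD hdD
          rcases hchain a hac d hdc with (hh | hh) | (hh | hh)
          · exact haD (m1 a d hh hnad).1
          · exact hdisj d hdD (m2 a d hh hnad).2
          · exact haD (m1 d a hh hnad.symm).2
          · exact hdisj d hdD (m2 d a hh hnad.symm).1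
        have hchain1 : ∀ a ∈ c, ∀ b ∈ c, anc1 a b ∨ anc1 b a := by
          intro a ha b hb
          rcases eq_or_ne a b with rfl | hne; · exact Or.inl (h1.refl a)
          rcases hchain a ha b hb with (hh | hh) | (hh | hh)
          · exact Or.inl hh
          · exact absurd (m2 a b hh hne).1 (fun hx => hdisj a (hsub a ha) hx)
          · exact Or.inr hh
          · exact absurd (m2 b a hh hne.symm).1 (fun hx => hdisj b (hsub b hb) hx)
        obtain ⟨y, p, hpp, hpsub, hpcov⟩ := h1.rpath c hsub hchain1
        exact ⟨v, y, p, hpp, fun z hz => by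
          exact_mod_cast hDS (by exact_mod_cast hpsub z hz), hpcov⟩
      · push_neg at hcD
        have hsub : ∀ x ∈ c, x ∈ S2 :=
          fun x hx => Finset.mem_sdiff.mpr ⟨hcS x hx, hcD x hx⟩
        have hchain2 : ∀ a ∈ c, ∀ b ∈ c, anc2 a b ∨ anc2 b a := by
          intro a ha b hb
          rcases eq_or_ne a b with rfl | hne; · exact Or.inl (h2.refl a)
          rcases hchain a ha b hb with (hh | hh) | (hh | hh)
          · exact absurd (m1 a b hh hne).1 (hcD a ha)
          · exact Or.inl hh
          · exact absurd (m1 b a hh hne.symm).1 (hcD b hb)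
          · exact Or.inr hh
        obtain ⟨x, y, p, hpp, hpsub, hpcov⟩ := h2.path c hc hsub hchain2
        exact ⟨x, y, p, hpp, fun z hz => by
          exact_mod_cast (Finset.mem_sdiff.mp (by exact_mod_cast hpsub z hz : z ∈ S2)).1,
          hpcov⟩


end LinTD

/-- If `G` admits a linear coloring with `k` colors, then the
treedepth of `G` is at most `2 ^ k`. -/
theorem treedepth_le_two_pow_of_linearColoring {V : Type*} [Fintype V]
    (G : SimpleGraph V) (k : ℕ) (ψ : V → Fin k) (h : IsLinearColoring G ψ) :
    treedepth G ≤ 2 ^ k := by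
  classical
  obtain ⟨anc, hg⟩ := LinTD.main (G := G) Finset.univ.card Finset.univ le_rfl
  apply Nat.sInf_le
  refine ⟨⟨anc, hg.refl, hg.antisymm, hg.trans, hg.chain,
    fun a b hab => hg.edge a (Finset.mem_univ a) b (Finset.mem_univ b) hab⟩, ?_⟩
  intro s hs
  rcases s.eq_empty_or_nonempty with rfl | hne
  · simp
  obtain ⟨x, y, p, hpp, -, hcov⟩ := hg.path s hne (fun x _ => Finset.mem_univ x) hs
  have h1 : s ⊆ p.support.toFinset := fun z hz => List.mem_toFinset.mpr (hcov z hz)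
  have h2 : s.card ≤ p.support.length :=
    le_trans (Finset.card_le_card h1) p.support.toFinset_card_le
  have h3 : (p.support.map ψ).toFinset.card ≤ k := by
    have := Finset.card_le_univ ((p.support.map ψ).toFinset)
    simpa using this
  have h4 := LinTD.support_length_le h k p hpp h3
  have h5 : 1 ≤ 2 ^ k := Nat.one_le_two_pow
  omega
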